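/- Let T be a tree containing a path v0,v1,v2,v3 with deg(v0)=1 and deg(v1)=deg(v2)=2, let T0 = T minus v0 and T1 = T0 minus v1. Then the number of fixed points of the minority process on T equals the number of fixed points on T0 plus the number on T1. -/

import Mathlib

open SimpleGraph Finset
open scoped Classical

variable {V : Type*}

/-- Number of neighbors of `v` with the same color as `v`. -/
noncomputable def sameCount (G : SimpleGraph V) [Fintype V] (c : V → Bool) (v : V) : ℕ :=
  ((G.neighborFinset v).filter fun u => c u = c v).card

/-- Number of neighbors of `v` with the opposite color. -/
noncomputable def diffCount (G : SimpleGraph V) [Fintype V] (c : V → Bool) (v : V) : ℕ :=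
  ((G.neighborFinset v).filter fun u => c u ≠ c v).card

/-- One round of the minority process. -/
noncomputable def minStep (G : SimpleGraph V) [Fintype V] (c : V → Bool) : V → Bool :=
  fun v => if sameCount G c v ≤ diffCount G c v then c v else !c v

/-- One round of the majority process. -/
noncomputable def majStep (G : SimpleGraph V) [Fintype V] (c : V → Bool) : V → Bool :=
  fun v => if diffCount G c v ≤ sameCount G c v then c v else !c v

/-- Number of edges of `F` incident to `v`. -/
noncomputable def incCount (F : Finset (Sym2 V)) (v : V) : ℕ :=
  (F.filter fun e => v ∈ e).card

/-- The monochromatic edges of a coloring. -/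
noncomputable def monoEdges (G : SimpleGraph V) [Fintype V] (c : V → Bool) : Finset (Sym2 V) :=
  G.edgeFinset.filter fun e => ∀ x ∈ e, ∀ y ∈ e, c x = c y

/-- The multichromatic edges of a coloring. -/
noncomputable def multiEdges (G : SimpleGraph V) [Fintype V] (c : V → Bool) : Finset (Sym2 V) :=
  G.edgeFinset.filter fun e => ∃ x ∈ e, ∃ y ∈ e, c x ≠ c y

/- ------------------ auxiliary lemmas ------------------ -/

lemma bool_not_eq_of_ne {a b : Bool} (h : a ≠ b) : (!a) = b := by
  cases a <;> cases b <;> simp_all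

lemma fix_iff (G : SimpleGraph V) [Fintype V] (c : V → Bool) :
    minStep G c = c ↔ ∀ v, sameCount G c v ≤ diffCount G c v := by
  constructor
  · intro h v
    by_contra hv
    have h2 := congrFun h v
    rw [minStep] at h2
    simp only [if_neg hv] at h2
    exact (Bool.not_ne_self (c v)) h2
  · intro h
    funext v
    simp [minStep, h v]

lemma ok_single (G : SimpleGraph V) [Fintype V] (c : V → Bool) {v a : V}
    (h : G.neighborFinset v = {a}) :
    (sameCount G c v ≤ diffCount G c v) ↔ c a ≠ c v := by
  unfold sameCount diffCount
  rw [h]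
  by_cases h1 : c a = c v <;> simp [Finset.filter_singleton, h1]

lemma ok_pair (G : SimpleGraph V) [Fintype V] (c : V → Bool) {v a b : V}
    (h : G.neighborFinset v = {a, b}) (hab : a ≠ b) :
    (sameCount G c v ≤ diffCount G c v) ↔ ¬(c a = c v ∧ c b = c v) := by
  unfold sameCount diffCount
  rw [h]
  by_cases h1 : c a = c v <;> by_cases h2 : c b = c v <;>
    simp [Finset.filter_insert, Finset.filter_singleton, h1, h2, hab]

lemma sameCount_induce (G : SimpleGraph V) [Fintype V] (s : Set V) [Fintype ↥s]
    (c : ↥s → Bool) (ct : V → Bool) (hag : ∀ u : ↥s, ct ↑u = c u)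
    (v : ↥s) (hfull : ∀ u, G.Adj ↑v u → u ∈ s) :
    sameCount (G.induce s) c v = sameCount G ct ↑v := by
  unfold sameCount
  apply Finset.card_bij (fun (u : ↥s) _ => (u : V))
  · intro u hu
    rw [Finset.mem_filter, mem_neighborFinset] at hu
    rw [Finset.mem_filter, mem_neighborFinset]
    refine ⟨comap_adj.mp hu.1, ?_⟩
    rw [hag u, hag v]; exact hu.2
  · intro u _ w _ h; exact Subtype.ext h
  · intro w hw
    rw [Finset.mem_filter, mem_neighborFinset] at hw
    refine ⟨⟨w, hfull w hw.1⟩, ?_, rfl⟩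
    rw [Finset.mem_filter, mem_neighborFinset]
    refine ⟨comap_adj.mpr hw.1, ?_⟩
    rw [← hag ⟨w, hfull w hw.1⟩, ← hag v]; exact hw.2

lemma diffCount_induce (G : SimpleGraph V) [Fintype V] (s : Set V) [Fintype ↥s]
    (c : ↥s → Bool) (ct : V → Bool) (hag : ∀ u : ↥s, ct ↑u = c u)
    (v : ↥s) (hfull : ∀ u, G.Adj ↑v u → u ∈ s) :
    diffCount (G.induce s) c v = diffCount G ct ↑v := by
  unfold diffCount
  apply Finset.card_bij (fun (u : ↥s) _ => (u : V))
  · intro u hu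
    rw [Finset.mem_filter, mem_neighborFinset] at hu
    rw [Finset.mem_filter, mem_neighborFinset]
    refine ⟨comap_adj.mp hu.1, ?_⟩
    rw [hag u, hag v]; exact hu.2
  · intro u _ w _ h; exact Subtype.ext h
  · intro w hw
    rw [Finset.mem_filter, mem_neighborFinset] at hw
    refine ⟨⟨w, hfull w hw.1⟩, ?_, rfl⟩
    rw [Finset.mem_filter, mem_neighborFinset]
    refine ⟨comap_adj.mpr hw.1, ?_⟩
    rw [← hag ⟨w, hfull w hw.1⟩, ← hag v]; exact hw.2

lemma ok_induce (G : SimpleGraph V) [Fintype V] (s : Set V) [Fintype ↥s]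
    (c : ↥s → Bool) (ct : V → Bool) (hag : ∀ u : ↥s, ct ↑u = c u)
    (v : ↥s) (hfull : ∀ u, G.Adj ↑v u → u ∈ s) :
    (sameCount (G.induce s) c v ≤ diffCount (G.induce s) c v ↔
      sameCount G ct ↑v ≤ diffCount G ct ↑v) := by
  rw [sameCount_induce G s c ct hag v hfull, diffCount_induce G s c ct hag v hfull]

lemma nbhd_of_deg_one (G : SimpleGraph V) [Fintype V] {v a : V}
    (hd : G.degree v = 1) (ha : G.Adj v a) : G.neighborFinset v = {a} := by
  symm
  apply Finset.eq_of_subset_of_card_le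
  · intro x hx; simp only [Finset.mem_singleton] at hx; subst hx
    rw [mem_neighborFinset]; exact ha
  · rw [card_neighborFinset_eq_degree, hd]; simp

lemma nbhd_of_deg_two (G : SimpleGraph V) [Fintype V] {v a b : V}
    (hd : G.degree v = 2) (ha : G.Adj v a) (hb : G.Adj v b) (hab : a ≠ b) :
    G.neighborFinset v = {a, b} := by
  symm
  apply Finset.eq_of_subset_of_card_le
  · intro x hx
    simp only [Finset.mem_insert, Finset.mem_singleton] at hx
    rcases hx with rfl | rfl
    · rw [mem_neighborFinset]; exact ha
    · rw [mem_neighborFinset]; exact hb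
  · rw [card_neighborFinset_eq_degree, hd, Finset.card_insert_of_notMem (by simpa using hab),
      Finset.card_singleton]

/-- Extension of a coloring of `s` to `V`, giving any vertex outside `s`
the color opposite to that of `p1`. -/
noncomputable def ext0 (s : Set V) (p1 : V) (hm1 : p1 ∈ s) (c0 : ↥s → Bool) : V → Bool :=
  fun v => if h : v ∈ s then c0 ⟨v, h⟩ else !c0 ⟨p1, hm1⟩

lemma ext0_coe (s : Set V) (p1 : V) (hm1 : p1 ∈ s) (c0 : ↥s → Bool) (u : ↥s) :
    ext0 s p1 hm1 c0 ↑u = c0 u := by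
  unfold ext0
  rw [dif_pos u.2]

lemma ext0_nmem (s : Set V) (p1 : V) (hm1 : p1 ∈ s) (c0 : ↥s → Bool) {v : V} (h : v ∉ s) :
    ext0 s p1 hm1 c0 v = !c0 ⟨p1, hm1⟩ := by
  unfold ext0
  rw [dif_neg h]

/-- Extension of a coloring of `s` to `V`: a vertex outside `s` gets the color of `p2`
if it differs from `w0`, and the opposite color if it equals `w0`. -/
noncomputable def ext1 (s : Set V) (p2 : V) (hm2 : p2 ∈ s) (w0 : V) (c1 : ↥s → Bool) :
    V → Bool :=
  fun v => if h : v ∈ s then c1 ⟨v, h⟩ else if v = w0 then !c1 ⟨p2, hm2⟩ else c1 ⟨p2, hm2⟩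

lemma ext1_coe (s : Set V) (p2 : V) (hm2 : p2 ∈ s) (w0 : V) (c1 : ↥s → Bool) (u : ↥s) :
    ext1 s p2 hm2 w0 c1 ↑u = c1 u := by
  unfold ext1
  rw [dif_pos u.2]

lemma ext1_w0 (s : Set V) (p2 : V) (hm2 : p2 ∈ s) (w0 : V) (c1 : ↥s → Bool)
    (h : w0 ∉ s) : ext1 s p2 hm2 w0 c1 w0 = !c1 ⟨p2, hm2⟩ := by
  unfold ext1
  rw [dif_neg h, if_pos rfl]

lemma ext1_other (s : Set V) (p2 : V) (hm2 : p2 ∈ s) (w0 : V) (c1 : ↥s → Bool)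
    {v : V} (h : v ∉ s) (hv : v ≠ w0) : ext1 s p2 hm2 w0 c1 v = c1 ⟨p2, hm2⟩ := by
  unfold ext1
  rw [dif_neg h, if_neg hv]

theorem stmt9 [Fintype V] (G : SimpleGraph V) (hT : G.IsTree)
    (v0 v1 v2 v3 : V)
    (h01 : G.Adj v0 v1) (h12 : G.Adj v1 v2) (h23 : G.Adj v2 v3)
    (h02 : v0 ≠ v2) (h03 : v0 ≠ v3) (h13 : v1 ≠ v3)
    (d0 : G.degree v0 = 1) (d1 : G.degree v1 = 2) (d2 : G.degree v2 = 2) :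
    Nat.card {c : V → Bool // minStep G c = c} =
      Nat.card {c : ↥{v : V | v ≠ v0} → Bool //
          minStep (G.induce {v : V | v ≠ v0}) c = c} +
      Nat.card {c : ↥{v : V | v ≠ v0 ∧ v ≠ v1} → Bool //
          minStep (G.induce {v : V | v ≠ v0 ∧ v ≠ v1}) c = c} := by
  classical
  set S0 : Set V := {v : V | v ≠ v0} with hS0
  set S1 : Set V := {v : V | v ≠ v0 ∧ v ≠ v1} with hS1
  have nb0 : G.neighborFinset v0 = {v1} := nbhd_of_deg_one G d0 h01
  have nb1 : G.neighborFinset v1 = {v0, v2} := nbhd_of_deg_two G d1 h01.symm h12 h02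
  have nb2 : G.neighborFinset v2 = {v1, v3} := nbhd_of_deg_two G d2 h12.symm h23 h13
  have adj0 : ∀ u, G.Adj u v0 → u = v1 := by
    intro u h
    have hu : u ∈ G.neighborFinset v0 := by rw [mem_neighborFinset]; exact h.symm
    rw [nb0, Finset.mem_singleton] at hu; exact hu
  have adj1 : ∀ u, G.Adj u v1 → u = v0 ∨ u = v2 := by
    intro u h
    have hu : u ∈ G.neighborFinset v1 := by rw [mem_neighborFinset]; exact h.symm
    rw [nb1] at hu; simpa using hu
  have hm1 : v1 ∈ S0 := h01.ne'
  have hm2 : v2 ∈ S0 := Ne.symm h02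
  have hm3 : v3 ∈ S0 := Ne.symm h03
  have hm2' : v2 ∈ S1 := ⟨Ne.symm h02, h12.ne'⟩
  have hm3' : v3 ∈ S1 := ⟨Ne.symm h03, Ne.symm h13⟩
  have hv0nS0 : v0 ∉ S0 := fun h => h rfl
  have hv0nS1 : v0 ∉ S1 := fun h => h.1 rfl
  have hv1nS1 : v1 ∉ S1 := fun h => h.2 rfl
  -- neighborhoods in the induced graphs
  have nbH0_1 : (G.induce S0).neighborFinset ⟨v1, hm1⟩ = {⟨v2, hm2⟩} := by
    ext u
    rw [mem_neighborFinset, Finset.mem_singleton]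
    constructor
    · intro h
      rcases adj1 ↑u (comap_adj.mp h).symm with h' | h'
      · exact absurd h' u.2
      · exact Subtype.ext h'
    · rintro rfl; exact comap_adj.mpr h12
  have nbH0_2 : (G.induce S0).neighborFinset ⟨v2, hm2⟩ = {⟨v1, hm1⟩, ⟨v3, hm3⟩} := by
    ext u
    rw [mem_neighborFinset, Finset.mem_insert, Finset.mem_singleton]
    constructor
    · intro h
      have h' : (↑u : V) ∈ G.neighborFinset v2 := by
        rw [mem_neighborFinset]; exact comap_adj.mp h
      rw [nb2] at h'
      rcases Finset.mem_insert.mp h' with h'' | h''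
      · exact Or.inl (Subtype.ext h'')
      · exact Or.inr (Subtype.ext (Finset.mem_singleton.mp h''))
    · rintro (rfl | rfl)
      · exact comap_adj.mpr h12.symm
      · exact comap_adj.mpr h23
  have nbH1_2 : (G.induce S1).neighborFinset ⟨v2, hm2'⟩ = {⟨v3, hm3'⟩} := by
    ext u
    rw [mem_neighborFinset, Finset.mem_singleton]
    constructor
    · intro h
      have h' : (↑u : V) ∈ G.neighborFinset v2 := by
        rw [mem_neighborFinset]; exact comap_adj.mp h
      rw [nb2] at h'
      rcases Finset.mem_insert.mp h' with h'' | h''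
      · exact absurd h'' u.2.2
      · exact Subtype.ext (Finset.mem_singleton.mp h'')
    · rintro rfl; exact comap_adj.mpr h23
  -- fullness of vertices in induced graphs
  have full0 : ∀ u : ↥S0, (↑u : V) ≠ v1 → ∀ w, G.Adj ↑u w → w ∈ S0 := by
    intro u hu w hw hw0
    exact hu (adj0 ↑u (hw0 ▸ hw))
  have full1 : ∀ u : ↥S1, (↑u : V) ≠ v2 → ∀ w, G.Adj ↑u w → w ∈ S1 := by
    intro u hu w hw
    constructor
    · intro hw0; exact u.2.2 (adj0 ↑u (hw0 ▸ hw))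
    · intro hw1
      rcases adj1 ↑u (hw1 ▸ hw) with h' | h'
      · exact u.2.1 h'
      · exact hu h'
  -- fixed-point characterizations
  have fixG_iff : ∀ c : V → Bool, minStep G c = c ↔
      (c v1 ≠ c v0 ∧ ¬(c v1 = c v2 ∧ c v3 = c v2) ∧
        ∀ u, u ≠ v0 → u ≠ v1 → u ≠ v2 → sameCount G c u ≤ diffCount G c u) := by
    intro c
    rw [fix_iff]
    constructor
    · intro h
      exact ⟨(ok_single G c nb0).mp (h v0), (ok_pair G c nb2 h13).mp (h v2),
        fun u _ _ _ => h u⟩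
    · rintro ⟨ha, hb, hc⟩ u
      by_cases e0 : u = v0
      · subst e0; exact (ok_single G c nb0).mpr ha
      by_cases e1 : u = v1
      · subst e1
        exact (ok_pair G c nb1 h02).mpr (fun hcon => ha hcon.1.symm)
      by_cases e2 : u = v2
      · subst e2; exact (ok_pair G c nb2 h13).mpr hb
      · exact hc u e0 e1 e2
  have fixT0_iff : ∀ c0 : ↥S0 → Bool, minStep (G.induce S0) c0 = c0 ↔
      (c0 ⟨v2, hm2⟩ ≠ c0 ⟨v1, hm1⟩ ∧
        ∀ u : ↥S0, (↑u : V) ≠ v1 →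
          sameCount (G.induce S0) c0 u ≤ diffCount (G.induce S0) c0 u) := by
    intro c0
    rw [fix_iff]
    constructor
    · intro h
      exact ⟨(ok_single _ c0 nbH0_1).mp (h _), fun u _ => h u⟩
    · rintro ⟨ha, hb⟩ u
      by_cases e : (↑u : V) = v1
      · have hu : u = ⟨v1, hm1⟩ := Subtype.ext e
        subst hu
        exact (ok_single _ c0 nbH0_1).mpr ha
      · exact hb u e
  have fixT1_iff : ∀ c1 : ↥S1 → Bool, minStep (G.induce S1) c1 = c1 ↔
      (c1 ⟨v3, hm3'⟩ ≠ c1 ⟨v2, hm2'⟩ ∧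
        ∀ u : ↥S1, (↑u : V) ≠ v2 →
          sameCount (G.induce S1) c1 u ≤ diffCount (G.induce S1) c1 u) := by
    intro c1
    rw [fix_iff]
    constructor
    · intro h
      exact ⟨(ok_single _ c1 nbH1_2).mp (h _), fun u _ => h u⟩
    · rintro ⟨ha, hb⟩ u
      by_cases e : (↑u : V) = v2
      · have hu : u = ⟨v2, hm2'⟩ := Subtype.ext e
        subst hu
        exact (ok_single _ c1 nbH1_2).mpr ha
      · exact hb u e
  -- the four transfer lemmas
  have key1 : ∀ c : V → Bool, minStep G c = c → c v1 ≠ c v2 →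
      minStep (G.induce S0) (fun u : ↥S0 => c ↑u) = fun u : ↥S0 => c ↑u := by
    intro c hc h
    rw [fixT0_iff]
    refine ⟨fun e => h e.symm, ?_⟩
    intro u hu
    exact (ok_induce G S0 (fun u => c ↑u) c (fun _ => rfl) u (full0 u hu)).mpr
      ((fix_iff G c).mp hc ↑u)
  have key2 : ∀ c : V → Bool, minStep G c = c → c v1 = c v2 →
      minStep (G.induce S1) (fun u : ↥S1 => c ↑u) = fun u : ↥S1 => c ↑u := by
    intro c hc h
    rw [fixT1_iff]
    constructor
    · have hok := (ok_pair G c nb2 h13).mp ((fix_iff G c).mp hc v2)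
      intro e; exact hok ⟨h, e⟩
    · intro u hu
      exact (ok_induce G S1 (fun u => c ↑u) c (fun _ => rfl) u (full1 u hu)).mpr
        ((fix_iff G c).mp hc ↑u)
  have key3 : ∀ c0 : ↥S0 → Bool, minStep (G.induce S0) c0 = c0 →
      minStep G (ext0 S0 v1 hm1 c0) = ext0 S0 v1 hm1 c0 := by
    intro c0 h0
    have hl := (fixT0_iff c0).mp h0
    have hv0 : ext0 S0 v1 hm1 c0 v0 = !c0 ⟨v1, hm1⟩ := ext0_nmem S0 v1 hm1 c0 hv0nS0
    have hv1 : ext0 S0 v1 hm1 c0 v1 = c0 ⟨v1, hm1⟩ := ext0_coe S0 v1 hm1 c0 ⟨v1, hm1⟩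
    have hv2 : ext0 S0 v1 hm1 c0 v2 = c0 ⟨v2, hm2⟩ := ext0_coe S0 v1 hm1 c0 ⟨v2, hm2⟩
    have hv3 : ext0 S0 v1 hm1 c0 v3 = c0 ⟨v3, hm3⟩ := ext0_coe S0 v1 hm1 c0 ⟨v3, hm3⟩
    rw [fixG_iff]
    refine ⟨?_, ?_, ?_⟩
    · rw [hv1, hv0]; simp
    · rw [hv1, hv2, hv3]
      rintro ⟨a, -⟩
      exact hl.1 a.symm
    · intro u u0 u1 u2
      have hu : u ∈ S0 := u0
      exact (ok_induce G S0 c0 (ext0 S0 v1 hm1 c0)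
        (fun w => ext0_coe S0 v1 hm1 c0 w) ⟨u, hu⟩ (full0 ⟨u, hu⟩ u1)).mp (hl.2 ⟨u, hu⟩ u1)
  have key4 : ∀ c1 : ↥S1 → Bool, minStep (G.induce S1) c1 = c1 →
      minStep G (ext1 S1 v2 hm2' v0 c1) = ext1 S1 v2 hm2' v0 c1 := by
    intro c1 h1
    have hl := (fixT1_iff c1).mp h1
    have hv0 : ext1 S1 v2 hm2' v0 c1 v0 = !c1 ⟨v2, hm2'⟩ := ext1_w0 S1 v2 hm2' v0 c1 hv0nS1
    have hv1 : ext1 S1 v2 hm2' v0 c1 v1 = c1 ⟨v2, hm2'⟩ :=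
      ext1_other S1 v2 hm2' v0 c1 hv1nS1 h01.ne'
    have hv2 : ext1 S1 v2 hm2' v0 c1 v2 = c1 ⟨v2, hm2'⟩ := ext1_coe S1 v2 hm2' v0 c1 ⟨v2, hm2'⟩
    have hv3 : ext1 S1 v2 hm2' v0 c1 v3 = c1 ⟨v3, hm3'⟩ := ext1_coe S1 v2 hm2' v0 c1 ⟨v3, hm3'⟩
    rw [fixG_iff]
    refine ⟨?_, ?_, ?_⟩
    · rw [hv1, hv0]; simp
    · rw [hv1, hv2, hv3]
      rintro ⟨-, b⟩
      exact hl.1 b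
    · intro u u0 u1 u2
      have hu : u ∈ S1 := ⟨u0, u1⟩
      exact (ok_induce G S1 c1 (ext1 S1 v2 hm2' v0 c1)
        (fun w => ext1_coe S1 v2 hm2' v0 c1 w) ⟨u, hu⟩ (full1 ⟨u, hu⟩ u2)).mp (hl.2 ⟨u, hu⟩ u2)
  -- round-trip identities
  have key5 : ∀ c : V → Bool, minStep G c = c → ext0 S0 v1 hm1 (fun u => c ↑u) = c := by
    intro c hc
    funext v
    by_cases h : v ∈ S0
    · exact ext0_coe S0 v1 hm1 (fun u => c ↑u) ⟨v, h⟩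
    · have hv : v = v0 := not_not.mp h
      rw [hv, ext0_nmem S0 v1 hm1 (fun u => c ↑u) hv0nS0]
      show (!c v1) = c v0
      exact bool_not_eq_of_ne ((fixG_iff c).mp hc).1
  have key6 : ∀ c : V → Bool, minStep G c = c → c v1 = c v2 →
      ext1 S1 v2 hm2' v0 (fun u => c ↑u) = c := by
    intro c hc h
    funext v
    by_cases hv : v ∈ S1
    · exact ext1_coe S1 v2 hm2' v0 (fun u => c ↑u) ⟨v, hv⟩
    · have hv' : v = v0 ∨ v = v1 := by
        by_contra hcon
        push_neg at hcon
        exact hv ⟨hcon.1, hcon.2⟩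
      rcases hv' with hve | hve
      · rw [hve, ext1_w0 S1 v2 hm2' v0 (fun u => c ↑u) hv0nS1]
        show (!c v2) = c v0
        rw [← h]
        exact bool_not_eq_of_ne ((fixG_iff c).mp hc).1
      · rw [hve, ext1_other S1 v2 hm2' v0 (fun u => c ↑u) hv1nS1 h01.ne']
        exact h.symm
  have key7 : ∀ c0 : ↥S0 → Bool, (fun u : ↥S0 => ext0 S0 v1 hm1 c0 ↑u) = c0 :=
    fun c0 => funext fun u => ext0_coe S0 v1 hm1 c0 u
  have key8 : ∀ c1 : ↥S1 → Bool, (fun u : ↥S1 => ext1 S1 v2 hm2' v0 c1 ↑u) = c1 :=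
    fun c1 => funext fun u => ext1_coe S1 v2 hm2' v0 c1 u
  have key9 : ∀ c0 : ↥S0 → Bool, minStep (G.induce S0) c0 = c0 →
      ¬(ext0 S0 v1 hm1 c0 v1 = ext0 S0 v1 hm1 c0 v2) := by
    intro c0 h0 e
    rw [ext0_coe S0 v1 hm1 c0 ⟨v1, hm1⟩, ext0_coe S0 v1 hm1 c0 ⟨v2, hm2⟩] at e
    exact ((fixT0_iff c0).mp h0).1 e.symm
  have key10 : ∀ c1 : ↥S1 → Bool,
      ext1 S1 v2 hm2' v0 c1 v1 = ext1 S1 v2 hm2' v0 c1 v2 := by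
    intro c1
    rw [ext1_other S1 v2 hm2' v0 c1 hv1nS1 h01.ne', ext1_coe S1 v2 hm2' v0 c1 ⟨v2, hm2'⟩]
  -- assemble the bijection
  rw [← Nat.card_sum]
  apply Nat.card_congr
  exact {
    toFun := fun c => if h : c.1 v1 = c.1 v2
      then Sum.inr ⟨fun u => c.1 ↑u, key2 c.1 c.2 h⟩
      else Sum.inl ⟨fun u => c.1 ↑u, key1 c.1 c.2 h⟩
    invFun := Sum.elim (fun c0 => ⟨ext0 S0 v1 hm1 c0.1, key3 c0.1 c0.2⟩)
      (fun c1 => ⟨ext1 S1 v2 hm2' v0 c1.1, key4 c1.1 c1.2⟩)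
    left_inv := by
      rintro ⟨c, hc⟩
      beta_reduce
      split
      next h => exact Subtype.ext (key6 c hc h)
      next h => exact Subtype.ext (key5 c hc)
    right_inv := by
      rintro (⟨c0, h0⟩ | ⟨c1, h1⟩)
      · simp only [Sum.elim_inl]
        beta_reduce
        by_cases hh : ext0 S0 v1 hm1 c0 v1 = ext0 S0 v1 hm1 c0 v2
        next => exact absurd hh (key9 c0 h0)
        next => exact (dif_neg hh).trans (congrArg Sum.inl (Subtype.ext (key7 c0)))
      · simp only [Sum.elim_inr]
        beta_reduce
        by_cases hh : ext1 S1 v2 hm2' v0 c1 v1 = ext1 S1 v2 hm2' v0 c1 v2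
        next => exact (dif_pos hh).trans (congrArg Sum.inr (Subtype.ext (key8 c1)))
        next => exact absurd (key10 c1) hh }
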